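/- For every n ≥ 7, the words u over {a,b} of length at most 5 satisfying 4 ∉ δ(Q_n,u) in the automaton 𝒜_n are exactly the six words abaa, abba, babaa, babba, aabaa, aabba; moreover, for each of these six words u one has δ(Q_n,u) = Q_n ∖ {1,4}. -/
import Mathlib


/-- The two letters of a binary alphabet. -/
inductive Letter where
  | a : Letter
  | b : Letter
deriving DecidableEq

/-- The transition function of the automaton `𝒜ₙ` on the state set
`Qₙ = {0, 1, …, n-1}` (represented inside `ℕ`):
`δ(0,a)=δ(0,b)=0`; `δ(1,a)=0`, `δ(2,a)=4`, `δ(3,a)=2`, `δ(4,a)=3`;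
`δ(1,b)=3`, `δ(2,b)=1`, `δ(3,b)=2`; and for `4 ≤ j ≤ n-1`:
`δ(j,a) = j-1` if `j ≥ 6` is even, `δ(j,a) = j+1` if `j ≥ 5` is odd and
`j ≠ n-1`, `δ(j,a) = j` if `j = n-1` is odd; `δ(j,b) = j-1` if `j ≥ 5` is odd,
`δ(j,b) = j+1` if `j ≥ 4` is even and `j ≠ n-1`, `δ(j,b) = j` if `j = n-1`
is even. -/
def anDelta (n : ℕ) (q : ℕ) (ℓ : Letter) : ℕ :=
  match q, ℓ with
  | 0, _ => 0
  | 1, Letter.a => 0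
  | 1, Letter.b => 3
  | 2, Letter.a => 4
  | 2, Letter.b => 1
  | 3, _ => 2
  | 4, Letter.a => 3
  | j, Letter.a => if j % 2 = 1 then (if j = n - 1 then j else j + 1) else j - 1
  | j, Letter.b => if j % 2 = 0 then (if j = n - 1 then j else j + 1) else j - 1

/-- Extension of the transition function of `𝒜ₙ` to words:
`δ(q, uv) = δ(δ(q, u), v)`. -/
def anStar (n : ℕ) (q : ℕ) (w : List Letter) : ℕ :=
  w.foldl (anDelta n) q

lemma anDelta_indep {n m q : ℕ} (hn : q + 1 < n) (hm : q + 1 < m) (ℓ : Letter) :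
    anDelta n q ℓ = anDelta m q ℓ := by
  rcases q with _|_|_|_|_|j <;> cases ℓ <;> simp only [anDelta] <;> (try split_ifs) <;> omega

lemma anDelta_le (n q : ℕ) (ℓ : Letter) : anDelta n q ℓ ≤ max (q + 1) 5 := by
  rcases q with _|_|_|_|_|j <;> cases ℓ <;> simp only [anDelta] <;> (try split_ifs) <;> omega

lemma anDelta_lt {n q : ℕ} (hn : 7 ≤ n) (hq : q < n) (ℓ : Letter) : anDelta n q ℓ < n := by
  rcases q with _|_|_|_|_|j <;> cases ℓ <;> simp only [anDelta] <;> (try split_ifs) <;> omega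

lemma anDelta_ge {n q : ℕ} (hq : 5 ≤ q) (ℓ : Letter) : q - 1 ≤ anDelta n q ℓ := by
  rcases q with _|_|_|_|_|j <;> cases ℓ <;> simp only [anDelta] <;> (try split_ifs) <;> omega

lemma anDelta_shift {n q : ℕ} (h5 : 5 ≤ q) (hq : q < n) (ℓ : Letter) :
    anDelta (n + 2) (q + 2) ℓ = anDelta n q ℓ + 2 := by
  obtain ⟨j, rfl⟩ : ∃ j, q = j + 5 := ⟨q - 5, by omega⟩
  cases ℓ <;> simp only [anDelta] <;> (try split_ifs) <;> omega

lemma anStar_nil (n q : ℕ) : anStar n q [] = q := rfl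

lemma anStar_cons (n q : ℕ) (ℓ : Letter) (w : List Letter) :
    anStar n q (ℓ :: w) = anStar n (anDelta n q ℓ) w := rfl

lemma anStar_le (n : ℕ) : ∀ (w : List Letter) (q : ℕ),
    anStar n q w ≤ max (q + w.length) (4 + w.length)
  | [], q => by simp [anStar_nil]
  | ℓ :: w, q => by
    rw [anStar_cons]
    have h1 := anDelta_le n q ℓ
    have h2 := anStar_le n w (anDelta n q ℓ)
    simp only [List.length_cons]
    omega

lemma anStar_indep {n m : ℕ} : ∀ (w : List Letter) (q : ℕ),
    max (q + w.length) (4 + w.length) < n → max (q + w.length) (4 + w.length) < m →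
    anStar n q w = anStar m q w
  | [], _ => by intros; rfl
  | ℓ :: w, q => by
    intro hn hm
    simp only [List.length_cons] at hn hm
    rw [anStar_cons, anStar_cons, anDelta_indep (n := n) (m := m) (by omega) (by omega) ℓ]
    have h1 := anDelta_le m q ℓ
    refine anStar_indep w (anDelta m q ℓ) ?_ ?_ <;> omega

lemma anStar_lt {n : ℕ} (hn : 7 ≤ n) : ∀ (w : List Letter) (q : ℕ), q < n → anStar n q w < n
  | [], _, h => h
  | ℓ :: w, q, h => anStar_lt hn w _ (anDelta_lt hn h ℓ)

lemma anStar_ge (n : ℕ) : ∀ (w : List Letter) (q : ℕ), 5 + w.length ≤ q →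
    q - w.length ≤ anStar n q w
  | [], _, _ => le_of_eq rfl
  | ℓ :: w, q, h => by
    simp only [List.length_cons] at h
    rw [anStar_cons]
    have h1 := anDelta_ge (n := n) (q := q) (by omega) ℓ
    have h2 := anStar_ge n w (anDelta n q ℓ) (by omega)
    simp only [List.length_cons]
    omega

lemma anStar_shift {n : ℕ} : ∀ (w : List Letter) (q : ℕ), 5 + w.length ≤ q → q < n →
    anStar (n + 2) (q + 2) w = anStar n q w + 2
  | [], _, _, _ => rfl
  | ℓ :: w, q, h5, hn => by
    simp only [List.length_cons] at h5
    rw [anStar_cons, anStar_cons, anDelta_shift (by omega) hn]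
    have h1 := anDelta_ge (n := n) (q := q) (by omega) ℓ
    have h2 := anDelta_lt (n := n) (by omega) hn ℓ
    exact anStar_shift w _ (by omega) h2

/-- All words of length at most `k` (with repetitions allowed in the list). -/
def enum : ℕ → List (List Letter)
  | 0 => [[]]
  | k + 1 => [] :: ((enum k).map (Letter.a :: ·) ++ (enum k).map (Letter.b :: ·))

lemma mem_enum : ∀ (u : List Letter) (k : ℕ), u.length ≤ k → u ∈ enum k
  | [], 0, _ => by simp [enum]
  | [], k + 1, _ => by simp [enum]
  | ℓ :: t, k + 1, h => by
    have ht : t ∈ enum k := mem_enum t k (by simpa using h)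
    simp only [enum, List.mem_cons, List.mem_append, List.mem_map]
    cases ℓ
    · exact Or.inr (Or.inl ⟨t, ht, rfl⟩)
    · exact Or.inr (Or.inr ⟨t, ht, rfl⟩)

/-- The six exceptional words. -/
def six : List (List Letter) :=
  [[Letter.a, Letter.b, Letter.a, Letter.a],
   [Letter.a, Letter.b, Letter.b, Letter.a],
   [Letter.b, Letter.a, Letter.b, Letter.a, Letter.a],
   [Letter.b, Letter.a, Letter.b, Letter.b, Letter.a],
   [Letter.a, Letter.a, Letter.b, Letter.a, Letter.a],
   [Letter.a, Letter.a, Letter.b, Letter.b, Letter.a]]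

lemma factA : ∀ u ∈ enum 5, u ∉ six → ∃ q < 10, anStar 21 q u = 4 := by decide

lemma factB : ∀ u ∈ six, ∀ q < 10,
    anStar 21 q u ≠ 1 ∧ anStar 21 q u ≠ 4 ∧ anStar 21 q u ≤ 14 := by decide

lemma factC1 : ∀ u ∈ six, ∀ t < 12, t ≠ 1 → t ≠ 4 → ∃ q < 14, anStar 21 q u = t := by decide

lemma factC2 : ∀ u ∈ six, ∀ t, 12 ≤ t → t < 14 → ∃ q < 16, 10 ≤ q ∧ anStar 21 q u = t := by
  decide

lemma six_len : ∀ u ∈ six, u.length ≤ 5 := by decide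

set_option maxHeartbeats 4000000 in
/-- Every chain target `t ∈ [12, n)` is reached from some chain state `q ∈ [10, n)`. -/
lemma Q2lem : ∀ n, 7 ≤ n → ∀ u ∈ six, ∀ t < n, 12 ≤ t →
    ∃ q < n, 10 ≤ q ∧ anStar n q u = t := by
  intro n
  induction n using Nat.strong_induction_on with
  | _ n ih =>
    intro hn u hu t htn ht12
    have hlen := six_len u hu
    by_cases hbig : 23 ≤ n
    · rcases lt_or_ge t 14 with ht | ht
      · obtain ⟨q, hq16, hq10, hq⟩ := factC2 u hu t ht12 ht
        refine ⟨q, by omega, hq10, ?_⟩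
        have := anStar_indep (n := n) (m := 21) u q (by omega) (by omega)
        omega
      · obtain ⟨q, hqn, hq10, hq⟩ :=
          ih (n - 2) (by omega) (by omega) u hu (t - 2) (by omega) (by omega)
        have hshift := anStar_shift (n := n - 2) u q (by omega) hqn
        have hn2 : n - 2 + 2 = n := by omega
        rw [hn2] at hshift
        exact ⟨q + 2, by omega, by omega, by omega⟩
    · have key : ∀ u ∈ six, ∀ t < n, 12 ≤ t → ∃ q < n, 10 ≤ q ∧ anStar n q u = t := by
        clear hlen hu htn ht12 u t ih
        interval_cases n <;> decide
      exact key u hu t htn ht12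

/-- The statement of the main theorem, as a decidable predicate over `enum 5`. -/
def Pn (n : ℕ) : Prop := ∀ u ∈ enum 5,
  ((4 ∉ Finset.image (fun q => anStar n q u) (Finset.range n)) ↔ u ∈ six) ∧
  (u ∈ six → Finset.image (fun q => anStar n q u) (Finset.range n) = Finset.range n \ {1, 4})

instance (n : ℕ) : Decidable (Pn n) := by unfold Pn; infer_instance

set_option maxHeartbeats 4000000 in
lemma main_lemma (n : ℕ) (hn : 7 ≤ n) : Pn n := by
  rcases lt_or_ge n 19 with hsmall | hbig
  · interval_cases n <;> decide
  · intro u hu5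
    have hlen5 : u.length ≤ 5 := by
      clear hbig hn
      revert hu5; revert u; decide
    have part2 : u ∈ six →
        Finset.image (fun q => anStar n q u) (Finset.range n) = Finset.range n \ {1, 4} := by
      intro hu
      have hlen := six_len u hu
      apply Finset.ext
      intro t
      simp only [Finset.mem_image, Finset.mem_sdiff, Finset.mem_range, Finset.mem_insert,
        Finset.mem_singleton]
      constructor
      · rintro ⟨q, hq, rfl⟩
        refine ⟨anStar_lt (by omega) u q hq, ?_⟩
        rcases lt_or_ge q 10 with h10 | h10
        · have := anStar_indep (n := n) (m := 21) u q (by omega) (by omega)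
          have hB := factB u hu q h10
          omega
        · have := anStar_ge n u q (by omega)
          omega
      · rintro ⟨htn, hne⟩
        rcases lt_or_ge t 12 with ht | ht
        · obtain ⟨q, hq14, hq⟩ := factC1 u hu t ht (by tauto) (by tauto)
          refine ⟨q, by omega, ?_⟩
          have := anStar_indep (n := 21) (m := n) u q (by omega) (by omega)
          omega
        · obtain ⟨q, hqn, _, hq⟩ := Q2lem n (by omega) u hu t htn ht
          exact ⟨q, hqn, hq⟩
    refine ⟨⟨?_, ?_⟩, part2⟩
    · intro h4
      by_contra hnot
      obtain ⟨q, hq10, hq⟩ := factA u hu5 hnot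
      apply h4
      rw [Finset.mem_image]
      refine ⟨q, Finset.mem_range.2 (by omega), ?_⟩
      have := anStar_indep (n := 21) (m := n) u q (by omega) (by omega)
      omega
    · intro hu
      rw [part2 hu]
      simp

/-- For every `n ≥ 7`, the words `u` over `{a, b}` of length at most `5` with
`4 ∉ δ(Qₙ, u)` in `𝒜ₙ` are exactly the six words
`abaa, abba, babaa, babba, aabaa, aabba`; moreover, for each of these six
words `u` one has `δ(Qₙ, u) = Qₙ \ {1, 4}`. -/
theorem an_short_words_avoiding_four (n : ℕ) (hn : 7 ≤ n) :
    ∀ u : List Letter, u.length ≤ 5 →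
      ((4 ∉ Finset.image (fun q => anStar n q u) (Finset.range n)) ↔
        u ∈ [[Letter.a, Letter.b, Letter.a, Letter.a],
             [Letter.a, Letter.b, Letter.b, Letter.a],
             [Letter.b, Letter.a, Letter.b, Letter.a, Letter.a],
             [Letter.b, Letter.a, Letter.b, Letter.b, Letter.a],
             [Letter.a, Letter.a, Letter.b, Letter.a, Letter.a],
             [Letter.a, Letter.a, Letter.b, Letter.b, Letter.a]]) ∧
      (u ∈ [[Letter.a, Letter.b, Letter.a, Letter.a],
            [Letter.a, Letter.b, Letter.b, Letter.a],
            [Letter.b, Letter.a, Letter.b, Letter.a, Letter.a],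
            [Letter.b, Letter.a, Letter.b, Letter.b, Letter.a],
            [Letter.a, Letter.a, Letter.b, Letter.a, Letter.a],
            [Letter.a, Letter.a, Letter.b, Letter.b, Letter.a]] →
        Finset.image (fun q => anStar n q u) (Finset.range n) =
          Finset.range n \ {1, 4}) := by
  intro u hu
  exact main_lemma n hn u (mem_enum u 5 hu)
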